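/- Let n ≥ 1, let A be an n×n integer matrix with determinant ±1, and let W ⊆ ℝⁿ be a nontrivial linear subspace with A·W = W such that every complex eigenvalue of the restriction of A to W has modulus greater than 1. If the image of W under the projection p : ℝⁿ → Tⁿ is dense in Tⁿ, then the induced automorphism f_A of Tⁿ is topologically transitive: for any two nonempty open sets U, V ⊆ Tⁿ there exists m ∈ ℕ such that f_A^m(U) ∩ V ≠ ∅. -/

import Mathlib

open Matrix Polynomial
open scoped Classical

noncomputable section

/-- The `n`-torus `ℝⁿ/ℤⁿ`, realized as `Fin n → ℝ/ℤ`. -/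
abbrev Torus (n : ℕ) := Fin n → AddCircle (1 : ℝ)

/-- The projection `p : ℝⁿ → Tⁿ`. -/
def torusProj (n : ℕ) (x : Fin n → ℝ) : Torus n := fun i => (x i : AddCircle (1 : ℝ))

/-- The linear action of an integer matrix on `ℝⁿ`. -/
def realMulVec {n : ℕ} (A : Matrix (Fin n) (Fin n) ℤ) (x : Fin n → ℝ) : Fin n → ℝ :=
  (A.map (Int.cast : ℤ → ℝ)).mulVec x

/-- The complex eigenvalues (with multiplicity) of an integer matrix. -/
def eigsC {n : ℕ} (A : Matrix (Fin n) (Fin n) ℤ) : Multiset ℂ :=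
  ((A.map (Int.cast : ℤ → ℂ)).charpoly).roots

/-- A complex number is a root of unity if some positive power of it is `1`. -/
def IsRootOfUnity (z : ℂ) : Prop := ∃ k : ℕ, 1 ≤ k ∧ z ^ k = 1

section Aux
open Filter
open scoped ENNReal NNReal

lemma charpoly_mulVecLin {d : ℕ} (M : Matrix (Fin d) (Fin d) ℂ) :
    (M.mulVecLin).charpoly = M.charpoly := by
  have h1 : M.mulVecLin = Matrix.toLin' M := by
    ext v; simp [Matrix.toLin'_apply, Matrix.mulVecLin_apply]
  have h2 : LinearMap.toMatrix (Pi.basisFun ℂ (Fin d)) (Pi.basisFun ℂ (Fin d)) M.mulVecLin = M := by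
    rw [LinearMap.toMatrix_eq_toMatrix', h1, LinearMap.toMatrix'_toLin']
  calc (M.mulVecLin).charpoly
      = ((LinearMap.toMatrix (Pi.basisFun ℂ (Fin d)) (Pi.basisFun ℂ (Fin d))
          M.mulVecLin).charpoly) := (LinearMap.charpoly_toMatrix _ _).symm
    _ = M.charpoly := by rw [h2]

lemma spec_lt_one {d : ℕ} (Mc Nc : Matrix (Fin d) (Fin d) ℂ)
    (hMN : Mc * Nc = 1)
    (hroots : ∀ z ∈ Mc.charpoly.roots, 1 < ‖z‖)
    {z : ℂ} (hz : z ∈ spectrum ℂ (LinearMap.toContinuousLinearMap Nc.mulVecLin)) :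
    ‖z‖₊ < 1 := by
  set T := LinearMap.toContinuousLinearMap Nc.mulVecLin with hT
  have hnotunit : ¬ IsUnit (algebraMap ℂ ((Fin d → ℂ) →L[ℂ] (Fin d → ℂ)) z - T) := hz
  rw [ContinuousLinearMap.isUnit_iff_bijective] at hnotunit
  set S : (Fin d → ℂ) →ₗ[ℂ] (Fin d → ℂ) :=
    z • (LinearMap.id : (Fin d → ℂ) →ₗ[ℂ] (Fin d → ℂ)) - Nc.mulVecLin with hS
  have hfun : ⇑(algebraMap ℂ ((Fin d → ℂ) →L[ℂ] (Fin d → ℂ)) z - T) = ⇑S := by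
    ext v i
    simp [Algebra.algebraMap_eq_smul_one, T, S, Matrix.mulVecLin_apply]
  rw [hfun] at hnotunit
  have hnotinj : ¬ Function.Injective S := by
    intro hinj
    exact hnotunit ⟨hinj, (LinearMap.injective_iff_surjective).mp hinj⟩
  -- eigenvector
  have : ∃ v : Fin d → ℂ, v ≠ 0 ∧ Nc.mulVec v = z • v := by
    by_contra hcon
    push_neg at hcon
    apply hnotinj
    rw [← LinearMap.ker_eq_bot, LinearMap.ker_eq_bot']
    intro v hv
    by_contra hv0
    refine (hcon v hv0) ?_
    have : z • v - Nc.mulVec v = 0 := by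
      simpa [S, Matrix.mulVecLin_apply] using hv
    have := sub_eq_zero.mp this
    exact this.symm
  obtain ⟨v, hv0, hv⟩ := this
  have hrecov : Mc.mulVec (Nc.mulVec v) = v := by
    rw [Matrix.mulVec_mulVec, hMN, Matrix.one_mulVec]
  have hz0 : z ≠ 0 := by
    rintro rfl
    rw [zero_smul] at hv
    rw [hv, Matrix.mulVec_zero] at hrecov
    exact hv0 hrecov.symm
  have hvz : v = z • Mc.mulVec v := by
    conv_lhs => rw [← hrecov, hv]
    rw [Matrix.mulVec_smul]
  have heig : Mc.mulVecLin v = z⁻¹ • v := by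
    rw [Matrix.mulVecLin_apply]
    calc Mc.mulVec v = z⁻¹ • (z • Mc.mulVec v) := by
          rw [smul_smul, inv_mul_cancel₀ hz0, one_smul]
      _ = z⁻¹ • v := by rw [← hvz]
  have hev : Module.End.HasEigenvalue Mc.mulVecLin z⁻¹ :=
    Module.End.hasEigenvalue_of_hasEigenvector
      ⟨Module.End.mem_eigenspace_iff.mpr heig, hv0⟩
  have hroot : (Mc.mulVecLin).charpoly.IsRoot z⁻¹ :=
    (Module.End.hasEigenvalue_iff_isRoot.mp hev).dvd (LinearMap.minpoly_dvd_charpoly _)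
  rw [_root_.charpoly_mulVecLin] at hroot
  have hmem : z⁻¹ ∈ Mc.charpoly.roots := by
    rw [Polynomial.mem_roots (Mc.charpoly_monic.ne_zero)]
    exact hroot
  have h1 := hroots _ hmem
  rw [norm_inv] at h1
  have habs : ‖z‖ < 1 := by
    by_contra h
    push_neg at h
    have h0 : (0:ℝ) < ‖z‖ := lt_of_lt_of_le zero_lt_one h
    have : (‖z‖)⁻¹ ≤ 1 := by
      rw [inv_le_one_iff₀]; right; exact h
    linarith
  simpa [← NNReal.coe_lt_coe] using habs

lemma norm_pow_small {d : ℕ} (hd : 0 < d) (T : (Fin d → ℂ) →L[ℂ] (Fin d → ℂ))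
    (hspec : ∀ z ∈ spectrum ℂ T, ‖z‖₊ < 1)
    {ε : ℝ} (hε : 0 < ε) :
    ∃ m : ℕ, 1 ≤ m ∧ ‖T ^ m‖ < ε := by
  haveI : Nonempty (Fin d) := ⟨⟨0, hd⟩⟩
  haveI : Nontrivial ((Fin d → ℂ) →L[ℂ] (Fin d → ℂ)) := by
    obtain ⟨x, hx⟩ := exists_ne (0 : Fin d → ℂ)
    refine ⟨1, 0, fun h => hx ?_⟩
    have := ContinuousLinearMap.ext_iff.mp h x
    simpa using this
  have hρ : spectralRadius ℂ T < 1 := by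
    have := spectrum.spectralRadius_lt_of_forall_lt T (r := 1) hspec
    simpa using this
  obtain ⟨r, hρr, hr1⟩ := ENNReal.lt_iff_exists_nnreal_btwn.mp hρ
  have hr1' : (r : ℝ) < 1 := by
    have := ENNReal.coe_lt_coe.mp (by simpa using hr1)
    exact_mod_cast this
  have hG := spectrum.pow_nnnorm_pow_one_div_tendsto_nhds_spectralRadius T
  have hev1 : ∀ᶠ m : ℕ in atTop, (‖T ^ m‖₊ : ℝ≥0∞) ^ (1 / (m:ℝ)) < (r : ℝ≥0∞) :=
    hG.eventually_lt_const hρr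
  have hev2 : ∀ᶠ m : ℕ in atTop, (r:ℝ) ^ m < ε :=
    (tendsto_pow_atTop_nhds_zero_of_lt_one r.coe_nonneg hr1').eventually (gt_mem_nhds hε)
  obtain ⟨m, hm1, hm2, hm3⟩ := ((eventually_ge_atTop 1).and (hev1.and hev2)).exists
  refine ⟨m, hm1, ?_⟩
  have hm0 : (m:ℝ) ≠ 0 := by positivity
  have key : (‖T ^ m‖₊ : ℝ≥0∞) < (r : ℝ≥0∞) ^ (m:ℕ) := by
    have h2 := ENNReal.rpow_lt_rpow hm2 (show (0:ℝ) < (m:ℝ) by positivity)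
    rwa [← ENNReal.rpow_mul, one_div, inv_mul_cancel₀ hm0, ENNReal.rpow_one,
      ENNReal.rpow_natCast] at h2
  rw [← ENNReal.coe_pow, ENNReal.coe_lt_coe] at key
  calc ‖T ^ m‖ = ((‖T ^ m‖₊ : ℝ≥0) : ℝ) := rfl
    _ < ((r ^ m : ℝ≥0) : ℝ) := by exact_mod_cast key
    _ = (r:ℝ) ^ m := by push_cast; ring
    _ < ε := hm3

lemma contraction_aux {E : Type*} [NormedAddCommGroup E] [NormedSpace ℝ E]
    [FiniteDimensional ℝ E] (hE : 0 < Module.finrank ℝ E)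
    (g : E ≃ₗ[ℝ] E)
    (hroots : ∀ z ∈ (((g : E →ₗ[ℝ] E).charpoly).map (algebraMap ℝ ℂ)).roots,
      1 < ‖z‖)
    {ε : ℝ} (hε : 0 < ε) :
    ∃ m : ℕ, 1 ≤ m ∧ ∀ y : E, ‖(((g.symm : E →ₗ[ℝ] E) ^ m)) y‖ ≤ ε * ‖y‖ := by
  classical
  set d := Module.finrank ℝ E with hd
  let b : Module.Basis (Fin d) ℝ E := Module.finBasis ℝ E
  set M : Matrix (Fin d) (Fin d) ℝ := LinearMap.toMatrix b b (g : E →ₗ[ℝ] E) with hM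
  set N : Matrix (Fin d) (Fin d) ℝ := LinearMap.toMatrix b b (g.symm : E →ₗ[ℝ] E) with hN
  have hgid : (g : E →ₗ[ℝ] E) * (g.symm : E →ₗ[ℝ] E) = 1 := by
    ext x; simp [Module.End.mul_apply]
  have hMN : M * N = 1 := by
    rw [hM, hN, ← LinearMap.toMatrix_mul, hgid, LinearMap.toMatrix_one]
  set Mc : Matrix (Fin d) (Fin d) ℂ := M.map (algebraMap ℝ ℂ) with hMc
  set Nc : Matrix (Fin d) (Fin d) ℂ := N.map (algebraMap ℝ ℂ) with hNc
  have hMNc : Mc * Nc = 1 := by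
    rw [hMc, hNc, ← Matrix.map_mul, hMN]
    ext i j
    simp only [Matrix.map_apply, Matrix.one_apply]
    split_ifs <;> simp
  have hmapk : ∀ k : ℕ, (N ^ k).map (algebraMap ℝ ℂ) = Nc ^ k := by
    intro k
    induction k with
    | zero =>
        ext i j
        simp only [pow_zero, Matrix.map_apply, Matrix.one_apply]
        split_ifs <;> simp
    | succ k ih => rw [pow_succ, Matrix.map_mul, ih, pow_succ]
  have hMcroots : ∀ z ∈ Mc.charpoly.roots, 1 < ‖z‖ := by
    intro z hz
    apply hroots
    rwa [← LinearMap.charpoly_toMatrix (g : E →ₗ[ℝ] E) b, ← Matrix.charpoly_map]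
  set T := LinearMap.toContinuousLinearMap Nc.mulVecLin with hT
  have hspec : ∀ z ∈ spectrum ℂ T, ‖z‖₊ < 1 := fun z hz =>
    spec_lt_one Mc Nc hMNc hMcroots hz
  -- constants
  set C : ℝ := ∑ j : Fin d, ‖LinearMap.toContinuousLinearMap (b.coord j)‖ with hC
  set B : ℝ := ∑ i : Fin d, ‖b i‖ with hB
  have hC0 : 0 ≤ C := Finset.sum_nonneg fun _ _ => norm_nonneg _
  have hB0 : 0 ≤ B := Finset.sum_nonneg fun _ _ => norm_nonneg _
  have hε' : 0 < ε / (B * C + 1) := by positivity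
  obtain ⟨m, hm1, hm2⟩ := norm_pow_small hE T hspec hε'
  refine ⟨m, hm1, fun y => ?_⟩
  -- powers of matrices
  have hNcpow : ∀ k : ℕ, (Nc ^ k).mulVecLin = (Nc.mulVecLin) ^ k := by
    intro k
    induction k with
    | zero => simp [Matrix.mulVecLin_one, Module.End.one_eq_id]
    | succ k ih => rw [pow_succ, Matrix.mulVecLin_mul, ih, pow_succ, Module.End.mul_eq_comp]
  have hTpow : ∀ k : ℕ, ⇑(T ^ k) = ⇑((Nc ^ k).mulVecLin) := by
    intro k
    rw [hNcpow k]
    rw [hT]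
    induction k with
    | zero => rfl
    | succ k ih =>
        rw [pow_succ, pow_succ, FunLike.coe_mul_eq_comp, ih, Module.End.mul_eq_comp,
          LinearMap.coe_comp, LinearMap.coe_toContinuousLinearMap']
  -- entry bound
  have hentry : ∀ i j : Fin d, |(N ^ m) i j| ≤ ‖T ^ m‖ := by
    intro i j
    have hmap : (N ^ m).map (algebraMap ℝ ℂ) = Nc ^ m := hmapk m
    have h1 : ‖(Nc ^ m) i j‖ = |(N ^ m) i j| := by
      rw [← hmap]
      simp [Matrix.map_apply, Complex.norm_real]
    rw [← h1]
    have h2 : (Nc ^ m) i j = (T ^ m) (Pi.single j 1) i := by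
      rw [hTpow m]
      rw [Matrix.mulVecLin_apply, Matrix.mulVec_single_one]
      rfl
    rw [h2]
    calc ‖(T ^ m) (Pi.single j 1) i‖
        = ‖(T ^ m) (Pi.single j 1) i‖ := rfl
      _ ≤ ‖(T ^ m) (Pi.single j 1)‖ := norm_le_pi_norm _ i
      _ ≤ ‖T ^ m‖ * ‖(Pi.single j 1 : Fin d → ℂ)‖ := ContinuousLinearMap.le_opNorm _ _
      _ = ‖T ^ m‖ := by rw [Pi.norm_single, norm_one, mul_one]
  -- coordinates
  have hrepr : b.repr (((g.symm : E →ₗ[ℝ] E) ^ m) y) = (N ^ m).mulVec (b.repr y) := by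
    rw [hN, LinearMap.toMatrix_pow, LinearMap.toMatrix_mulVec_repr]
  have hcoord : ∀ j : Fin d, |b.repr y j| ≤ ‖LinearMap.toContinuousLinearMap (b.coord j)‖ * ‖y‖ := by
    intro j
    have : b.repr y j = LinearMap.toContinuousLinearMap (b.coord j) y := by
      rw [LinearMap.coe_toContinuousLinearMap']
      simp [Module.Basis.coord_apply]
    rw [this]
    exact (LinearMap.toContinuousLinearMap (b.coord j)).le_opNorm y
  have hTm0 : 0 ≤ ‖T ^ m‖ := norm_nonneg _
  have hcoef : ∀ i : Fin d, |(N ^ m).mulVec (b.repr y) i| ≤ ‖T ^ m‖ * (C * ‖y‖) := by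
    intro i
    have : (N ^ m).mulVec (b.repr y) i = ∑ j, (N ^ m) i j * b.repr y j := rfl
    rw [this]
    calc |∑ j, (N ^ m) i j * b.repr y j|
        ≤ ∑ j, |(N ^ m) i j * b.repr y j| := Finset.abs_sum_le_sum_abs _ _
      _ ≤ ∑ j, ‖T ^ m‖ * (‖LinearMap.toContinuousLinearMap (b.coord j)‖ * ‖y‖) := by
          apply Finset.sum_le_sum
          intro j _
          rw [abs_mul]
          exact mul_le_mul (hentry i j) (hcoord j) (abs_nonneg _) hTm0
      _ = ‖T ^ m‖ * (C * ‖y‖) := by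
          rw [← Finset.mul_sum, hC, Finset.sum_mul, Finset.mul_sum]
  calc ‖((g.symm : E →ₗ[ℝ] E) ^ m) y‖
      = ‖∑ i, b.repr (((g.symm : E →ₗ[ℝ] E) ^ m) y) i • b i‖ := by
        rw [Module.Basis.sum_repr]
    _ ≤ ∑ i, ‖b.repr (((g.symm : E →ₗ[ℝ] E) ^ m) y) i • b i‖ := norm_sum_le _ _
    _ = ∑ i, |(N ^ m).mulVec (b.repr y) i| * ‖b i‖ := by
        apply Finset.sum_congr rfl
        intro i _
        rw [hrepr, norm_smul, Real.norm_eq_abs]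
    _ ≤ ∑ i, (‖T ^ m‖ * (C * ‖y‖)) * ‖b i‖ := by
        apply Finset.sum_le_sum
        intro i _
        exact mul_le_mul_of_nonneg_right (hcoef i) (norm_nonneg _)
    _ = ‖T ^ m‖ * C * B * ‖y‖ := by
        rw [← Finset.mul_sum, ← hB]; ring
    _ ≤ ε * ‖y‖ := by
        apply mul_le_mul_of_nonneg_right _ (norm_nonneg y)
        have h3 : ‖T ^ m‖ * C * B ≤ (ε / (B * C + 1)) * C * B := by
          apply mul_le_mul_of_nonneg_right _ hB0
          exact mul_le_mul_of_nonneg_right (le_of_lt hm2) hC0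
        refine le_trans h3 ?_
        rw [div_mul_eq_mul_div, div_mul_eq_mul_div, div_le_iff₀ (by positivity)]
        nlinarith [mul_nonneg hB0 hC0]

lemma torus_dist_le {n : ℕ} (x y : Fin n → ℝ) :
    dist (torusProj n x) (torusProj n y) ≤ dist x y := by
  rw [dist_pi_le_iff dist_nonneg]
  intro i
  calc dist ((x i : AddCircle (1:ℝ))) ((y i : AddCircle (1:ℝ)))
      ≤ dist (x i) (y i) := by
        rw [dist_eq_norm, dist_eq_norm]
        have : ((x i : AddCircle (1:ℝ))) - ((y i : AddCircle (1:ℝ)))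
            = ((x i - y i : ℝ) : AddCircle (1:ℝ)) := rfl
        rw [this]
        exact QuotientAddGroup.norm_mk_le_norm
    _ ≤ dist x y := dist_le_pi_dist x y i

lemma finite_net {n : ℕ} (W : Set (Fin n → ℝ)) (hdense : Dense (torusProj n '' W))
    {δ : ℝ} (hδ : 0 < δ) :
    ∃ T : Finset (Fin n → ℝ), (∀ w ∈ T, w ∈ W) ∧
      ∀ t : Torus n, ∃ w ∈ T, dist t (torusProj n w) < δ := by
  classical
  have hcov : (Set.univ : Set (Torus n)) ⊆ ⋃ w : W, Metric.ball (torusProj n w) δ := by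
    intro t _
    obtain ⟨p, hpmem, hp⟩ := Metric.mem_closure_iff.mp (hdense t) δ hδ
    obtain ⟨w, hw, rfl⟩ := hpmem
    exact Set.mem_iUnion.mpr ⟨⟨w, hw⟩, by simpa [Metric.mem_ball] using hp⟩
  obtain ⟨s, hs⟩ := isCompact_univ.elim_finite_subcover
    (fun w : W => Metric.ball (torusProj n (w : Fin n → ℝ)) δ)
    (fun w => Metric.isOpen_ball) hcov
  refine ⟨s.image Subtype.val, ?_, ?_⟩
  · intro w hw
    obtain ⟨⟨w', hw'⟩, _, rfl⟩ := Finset.mem_image.mp hw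
    exact hw'
  · intro t
    have := hs (Set.mem_univ t)
    obtain ⟨w, hws, htw⟩ := Set.mem_iUnion₂.mp this
    refine ⟨w, Finset.mem_image.mpr ⟨w, hws, rfl⟩, ?_⟩
    simpa [Metric.mem_ball] using htw

end Aux

theorem transitive_of_dense_unstable {n : ℕ} (hn : 1 ≤ n)
    (A : Matrix (Fin n) (Fin n) ℤ) (hAdet : A.det = 1 ∨ A.det = -1)
    (W : Submodule ℝ (Fin n → ℝ)) (hWne : W ≠ ⊥)
    (hWinv : ∀ x ∈ W, (A.map (Int.cast : ℤ → ℝ)).mulVecLin x ∈ W)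
    (hWeq : W.map (A.map (Int.cast : ℤ → ℝ)).mulVecLin = W)
    (hWeig : ∀ z ∈ ((((A.map (Int.cast : ℤ → ℝ)).mulVecLin.restrict hWinv).charpoly).map
      (algebraMap ℝ ℂ)).roots, 1 < ‖z‖)
    (hdense : Dense (torusProj n '' (W : Set (Fin n → ℝ))))
    (fA : Torus n → Torus n)
    (hfA : ∀ x, fA (torusProj n x) = torusProj n (realMulVec A x)) :
    ∀ U V : Set (Torus n), IsOpen U → IsOpen V → U.Nonempty → V.Nonempty →
      ∃ m : ℕ, (fA^[m] '' U ∩ V).Nonempty := by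
  intro U V hU hV hUne hVne
  classical
  set L := (A.map (Int.cast : ℤ → ℝ)).mulVecLin with hL
  set f : W →ₗ[ℝ] W := L.restrict hWinv with hf
  have hsurj : Function.Surjective f := by
    rintro ⟨y, hy⟩
    have hy' : y ∈ W.map L := by rw [hWeq]; exact hy
    obtain ⟨x, hx, hxy⟩ := hy'
    exact ⟨⟨x, hx⟩, Subtype.ext hxy⟩
  have hinj : Function.Injective f := LinearMap.injective_iff_surjective.mpr hsurj
  set g : W ≃ₗ[ℝ] W := LinearEquiv.ofBijective f ⟨hinj, hsurj⟩ with hg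
  have hgco : (g : W →ₗ[ℝ] W) = f := rfl
  have hrk : 0 < Module.finrank ℝ W := by
    rw [Module.finrank_pos_iff]
    exact Submodule.nontrivial_iff_ne_bot.mpr hWne
  -- iterate formula
  have hiter : ∀ (m : ℕ) (x : Fin n → ℝ), fA^[m] (torusProj n x) = torusProj n ((L ^ m) x) := by
    intro m
    induction m with
    | zero => intro x; simp
    | succ k ih =>
        intro x
        rw [Function.iterate_succ_apply', ih, hfA]
        have hstep : realMulVec A ((L ^ k) x) = (L ^ (k + 1)) x := by
          rw [pow_succ']
          rfl
        rw [hstep]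
  -- restriction compatibility
  have hLpow : ∀ (m : ℕ) (v : W), (L ^ m) (v : Fin n → ℝ) = ((f ^ m) v : Fin n → ℝ) := by
    intro m
    induction m with
    | zero => intro v; simp
    | succ k ih =>
        intro v
        rw [pow_succ', Module.End.mul_apply, pow_succ', Module.End.mul_apply, ih v]
        rfl
  -- cancellation of g.symm powers
  have hcancel : ∀ (k : ℕ) (v : W), (f ^ k) (((g.symm : W →ₗ[ℝ] W) ^ k) v) = v := by
    intro k
    induction k with
    | zero => intro v; simp
    | succ k ih =>
        intro v
        rw [pow_succ, Module.End.mul_apply, pow_succ', Module.End.mul_apply]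
        have hfs : f ((g.symm : W →ₗ[ℝ] W) (((g.symm : W →ₗ[ℝ] W) ^ k) v))
            = ((g.symm : W →ₗ[ℝ] W) ^ k) v := g.apply_symm_apply _
        rw [hfs, ih]
  -- choose data from V
  obtain ⟨v₀, hv₀⟩ := hVne
  obtain ⟨δ, hδ0, hδball⟩ := Metric.isOpen_iff.mp hV v₀ hv₀
  -- choose data from U
  obtain ⟨u₀, hu₀W, hu₀U⟩ := hdense.exists_mem_open hU hUne
  obtain ⟨w₀, hw₀W, hw₀eq⟩ := hu₀W
  obtain ⟨ε, hε0, hεball⟩ := Metric.isOpen_iff.mp hU u₀ hu₀U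
  -- finite net
  obtain ⟨T', hT'sub, hT'net⟩ := finite_net (W : Set (Fin n → ℝ)) hdense hδ0
  set R : ℝ := ∑ w ∈ T', ‖w‖ with hR
  have hR0 : 0 ≤ R := Finset.sum_nonneg fun _ _ => norm_nonneg _
  have hRb : ∀ w ∈ T', ‖w‖ ≤ R := fun w hw =>
    Finset.single_le_sum (f := fun w => ‖w‖) (fun i _ => norm_nonneg i) hw
  -- contraction
  have hroots' : ∀ z ∈ (((g : W →ₗ[ℝ] W).charpoly).map (algebraMap ℝ ℂ)).roots,
      1 < ‖z‖ := by
    rw [hgco]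
    exact hWeig
  have hεR : 0 < ε / (R + 1) := by positivity
  obtain ⟨m, hm1, hmb⟩ := contraction_aux hrk g hroots' hεR
  -- target point
  set q : Torus n := torusProj n ((L ^ m) w₀) with hq
  obtain ⟨w₁, hw₁T, hw₁close⟩ := hT'net (v₀ - q)
  have hw₁W : w₁ ∈ W := hT'sub w₁ hw₁T
  set x : W := ((g.symm : W →ₗ[ℝ] W) ^ m) ⟨w₁, hw₁W⟩ with hx
  have hxsmall : ‖(x : Fin n → ℝ)‖ < ε := by
    have h1 : ‖x‖ ≤ (ε / (R + 1)) * ‖(⟨w₁, hw₁W⟩ : W)‖ := hmb _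
    have h2 : ‖(⟨w₁, hw₁W⟩ : W)‖ = ‖w₁‖ := rfl
    have h3 : ‖(x : Fin n → ℝ)‖ = ‖x‖ := rfl
    rw [h3]
    calc ‖x‖ ≤ (ε / (R + 1)) * ‖w₁‖ := by rw [← h2]; exact h1
      _ ≤ (ε / (R + 1)) * R := by
          exact mul_le_mul_of_nonneg_left (hRb w₁ hw₁T) (le_of_lt hεR)
      _ < ε := by
          rw [div_mul_eq_mul_div, div_lt_iff₀ (by positivity)]
          nlinarith
  -- the point in U
  have huin : torusProj n (w₀ + (x : Fin n → ℝ)) ∈ U := by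
    apply hεball
    rw [Metric.mem_ball, ← hw₀eq]
    calc dist (torusProj n (w₀ + (x : Fin n → ℝ))) (torusProj n w₀)
        ≤ dist (w₀ + (x : Fin n → ℝ)) w₀ := torus_dist_le _ _
      _ = ‖(x : Fin n → ℝ)‖ := by rw [dist_eq_norm]; simp
      _ < ε := hxsmall
  -- its image lands in V
  have hLmx : (L ^ m) (x : Fin n → ℝ) = w₁ := by
    rw [hLpow m x, hx, hcancel m]
  have himg : fA^[m] (torusProj n (w₀ + (x : Fin n → ℝ))) = q + torusProj n w₁ := by
    rw [hiter m, map_add, hLmx]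
    rfl
  have hvin : fA^[m] (torusProj n (w₀ + (x : Fin n → ℝ))) ∈ V := by
    apply hδball
    rw [himg, Metric.mem_ball]
    have : dist (q + torusProj n w₁) v₀ = dist (torusProj n w₁) (v₀ - q) := by
      rw [dist_eq_norm, dist_eq_norm]
      congr 1
      abel
    rw [this, dist_comm]
    exact hw₁close
  exact ⟨m, ⟨fA^[m] (torusProj n (w₀ + (x : Fin n → ℝ))),
    ⟨torusProj n (w₀ + (x : Fin n → ℝ)), huin, rfl⟩, hvin⟩⟩
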